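/- Let q ≥ 3 be an integer and let e be an even integer with 2 ≤ e ≤ q−1. For every real v ≠ 0, setting α = −6/v + 12/v² and β = −12/v², the following identity holds: ( (q−1)! / ((q−1−e)! · 2^{e/2} · (e/2)!) ) · α^{e/2} + (q−1) · ( (q−2)! / ((q−e)! · 2^{e/2−1} · (e/2−1)!) ) · β · α^{e/2−1} = ( (−3)^{e/2} (q−1)! / (q−e)! ) · Σ_{j=0}^{e/2} ( (q−e−2j) (−2)^j / ((e/2−j)! · j!) ) · v^{−(e/2+j)}. -/

import Mathlib

open scoped BigOperators

/-- the combinatorial identity behind Weyl's curvature invariant `H_e`: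
for `q ≥ 3`, even `e` with `2 ≤ e ≤ q−1`, and `v ≠ 0`, setting `α = −6/v + 12/v²` and
`β = −12/v²`,
`((q−1)!/((q−1−e)! 2^{e/2} (e/2)!)) α^{e/2}
 + (q−1)((q−2)!/((q−e)! 2^{e/2−1} (e/2−1)!)) β α^{e/2−1}
 = ((−3)^{e/2}(q−1)!/(q−e)!) Σ_{j=0}^{e/2} ((q−e−2j)(−2)^j/((e/2−j)! j!)) v^{−(e/2+j)}`. -/
theorem weyl_invariant_pairing_identity (q e : ℕ) (hq : 3 ≤ q) (he : Even e)
    (he2 : 2 ≤ e) (heq : e ≤ q - 1) (v : ℝ) (hv : v ≠ 0) :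
    ((Nat.factorial (q - 1) : ℝ) /
        ((Nat.factorial (q - 1 - e) : ℝ) * 2 ^ (e / 2) * (Nat.factorial (e / 2) : ℝ))) *
        (-6 / v + 12 / v ^ 2) ^ (e / 2)
      + ((q : ℝ) - 1) * ((Nat.factorial (q - 2) : ℝ) /
          ((Nat.factorial (q - e) : ℝ) * 2 ^ (e / 2 - 1) *
            (Nat.factorial (e / 2 - 1) : ℝ))) *
        (-12 / v ^ 2) * (-6 / v + 12 / v ^ 2) ^ (e / 2 - 1)
      = ((-3 : ℝ) ^ (e / 2) * (Nat.factorial (q - 1) : ℝ) / (Nat.factorial (q - e) : ℝ)) *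
          ∑ j ∈ Finset.range (e / 2 + 1),
            (((q : ℝ) - (e : ℝ) - 2 * (j : ℝ)) * (-2 : ℝ) ^ j /
                ((Nat.factorial (e / 2 - j) : ℝ) * (Nat.factorial j : ℝ))) *
              (v ^ (e / 2 + j))⁻¹ := by
  obtain ⟨m, rfl⟩ : ∃ m, e = 2 * (m + 1) := ⟨e / 2 - 1, by obtain ⟨k, hk⟩ := he; omega⟩
  obtain ⟨p, rfl⟩ : ∃ p, q = 2 * (m + 1) + p + 1 := ⟨q - (2 * (m + 1) + 1), by omega⟩
  have h1 : 2 * (m + 1) / 2 = m + 1 := by omega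
  have h2 : 2 * (m + 1) + p + 1 - 1 = 2 * m + p + 2 := by omega
  have h3 : 2 * (m + 1) + p + 1 - 2 = 2 * m + p + 1 := by omega
  have h4 : 2 * (m + 1) + p + 1 - 2 * (m + 1) = p + 1 := by omega
  have h5 : 2 * m + p + 2 - 2 * (m + 1) = p := by omega
  rw [h1, h2, h3, h4, Nat.add_sub_cancel]
  rw [h5]
  push_cast
  have hα : (-6 / v + 12 / v ^ 2 : ℝ) = -3 * v⁻¹ * (-4 * v⁻¹ + 2) := by
    field_simp; ring
  -- nonzero facts
  have hfac : ∀ n : ℕ, ((n.factorial : ℝ)) ≠ 0 := fun n =>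
    Nat.cast_ne_zero.mpr (Nat.factorial_ne_zero n)
  have hvi : (v : ℝ)⁻¹ ≠ 0 := inv_ne_zero hv
  have E3 : (∑ x ∈ Finset.range (m + 1 + 1),
        (2 * ((m:ℝ) + 1) + ↑p + 1 - 2 * (↑m + 1) - 2 * ↑x) * (-2 : ℝ) ^ x /
          (↑(m + 1 - x).factorial * ↑x.factorial) * (v ^ (m + 1 + x))⁻¹)
      = ∑ x ∈ Finset.range (m + 1 + 1),
        ((((p:ℝ) + 1) * (-2 : ℝ) ^ x / (↑(m + 1 - x).factorial * ↑x.factorial) *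
            (v ^ (m + 1 + x))⁻¹)
          + ((-2 * (x:ℝ)) * (-2 : ℝ) ^ x / (↑(m + 1 - x).factorial * ↑x.factorial) *
            (v ^ (m + 1 + x))⁻¹)) :=
    Finset.sum_congr rfl fun x _ => by ring
  have E4 : (∑ x ∈ Finset.range (m + 1 + 1),
        ((((p:ℝ) + 1) * (-2 : ℝ) ^ x / (↑(m + 1 - x).factorial * ↑x.factorial) *
            (v ^ (m + 1 + x))⁻¹)
          + ((-2 * (x:ℝ)) * (-2 : ℝ) ^ x / (↑(m + 1 - x).factorial * ↑x.factorial) *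
            (v ^ (m + 1 + x))⁻¹)))
      = (∑ x ∈ Finset.range (m + 1 + 1),
          (((p:ℝ) + 1) * (-2 : ℝ) ^ x / (↑(m + 1 - x).factorial * ↑x.factorial) *
            (v ^ (m + 1 + x))⁻¹))
        + (∑ x ∈ Finset.range (m + 1 + 1),
          ((-2 * (x:ℝ)) * (-2 : ℝ) ^ x / (↑(m + 1 - x).factorial * ↑x.factorial) *
            (v ^ (m + 1 + x))⁻¹)) := Finset.sum_add_distrib
  have E1 : (↑(2 * m + p + 2).factorial / (↑p.factorial * 2 ^ (m + 1) * ↑(m + 1).factorial) *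
        (-6 / v + 12 / v ^ 2) ^ (m + 1) : ℝ)
      = ((-3 : ℝ) ^ (m + 1) * ↑(2 * m + p + 2).factorial / ↑(p + 1).factorial) *
        ∑ x ∈ Finset.range (m + 1 + 1),
          (((p:ℝ) + 1) * (-2 : ℝ) ^ x / (↑(m + 1 - x).factorial * ↑x.factorial) *
            (v ^ (m + 1 + x))⁻¹) := by
    rw [hα, mul_pow, mul_pow, add_pow, Finset.mul_sum, Finset.mul_sum, Finset.mul_sum]
    refine Finset.sum_congr rfl fun k hk => ?_
    have hk' : k ≤ m + 1 := by simpa using Nat.lt_succ_iff.mp (Finset.mem_range.mp hk)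
    have hC : ((Nat.choose (m + 1) k : ℝ) * ↑k.factorial * ↑(m + 1 - k).factorial)
        = ↑(m + 1).factorial := by
      exact_mod_cast congrArg (Nat.cast (R := ℝ))
        (Nat.choose_mul_factorial_mul_factorial hk')
    have hfp : ((p + 1).factorial : ℝ) = ((p:ℝ) + 1) * ↑p.factorial := by
      rw [Nat.factorial_succ]; push_cast; ring
    have h2k : (2 : ℝ) ^ (m + 1) = 2 ^ (m + 1 - k) * 2 ^ k := by
      rw [← pow_add]; congr 1; omega
    have h4k : (-4 * v⁻¹ : ℝ) ^ k = (-2) ^ k * 2 ^ k * (v⁻¹) ^ k := by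
      rw [mul_pow, show (-4 : ℝ) = -2 * 2 by norm_num, mul_pow]
    have hvk : ((v ^ (m + 1 + k) : ℝ))⁻¹ = (v⁻¹) ^ (m + 1) * (v⁻¹) ^ k := by
      rw [← inv_pow, pow_add]
    rw [← hC, hfp, h2k, h4k, hvk]
    have hCne : ((Nat.choose (m + 1) k : ℝ)) ≠ 0 :=
      Nat.cast_ne_zero.mpr (Nat.choose_pos hk').ne'
    field_simp
  have E2 : ((2 * ((m:ℝ) + 1) + ↑p + 1 - 1) *
        (↑(2 * m + p + 1).factorial / (↑(p + 1).factorial * 2 ^ m * ↑m.factorial)) *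
        (-12 / v ^ 2) * (-6 / v + 12 / v ^ 2) ^ m : ℝ)
      = ((-3 : ℝ) ^ (m + 1) * ↑(2 * m + p + 2).factorial / ↑(p + 1).factorial) *
        ∑ x ∈ Finset.range (m + 1 + 1),
          ((-2 * (x:ℝ)) * (-2 : ℝ) ^ x / (↑(m + 1 - x).factorial * ↑x.factorial) *
            (v ^ (m + 1 + x))⁻¹) := by
    rw [Finset.sum_range_succ' (fun x => (-2 * (x:ℝ)) * (-2 : ℝ) ^ x /
        (↑(m + 1 - x).factorial * ↑x.factorial) * (v ^ (m + 1 + x))⁻¹) (m + 1)]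
    simp only [Nat.cast_zero, mul_zero, zero_mul, neg_zero, zero_div, add_zero]
    rw [hα, mul_pow, mul_pow, add_pow]
    simp only [Finset.mul_sum]
    refine Finset.sum_congr rfl fun k hk => ?_
    have hk' : k ≤ m := Nat.lt_succ_iff.mp (Finset.mem_range.mp hk)
    have hC : ((Nat.choose m k : ℝ) * ↑k.factorial * ↑(m - k).factorial)
        = ↑m.factorial := by
      exact_mod_cast congrArg (Nat.cast (R := ℝ))
        (Nat.choose_mul_factorial_mul_factorial hk')
    have hmk : m + 1 - (k + 1) = m - k := by omega
    have hfk : ((k + 1).factorial : ℝ) = ((k:ℝ) + 1) * ↑k.factorial := by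
      rw [Nat.factorial_succ]; push_cast; ring
    have hfq : ((2 * m + p + 2).factorial : ℝ)
        = (2 * (m:ℝ) + ↑p + 2) * ↑(2 * m + p + 1).factorial := by
      rw [show 2 * m + p + 2 = (2 * m + p + 1) + 1 by omega, Nat.factorial_succ]
      push_cast; ring
    have h2k : (2 : ℝ) ^ m = 2 ^ (m - k) * 2 ^ k := by
      rw [← pow_add]; congr 1; omega
    have h4k : (-4 * v⁻¹ : ℝ) ^ k = (-2) ^ k * 2 ^ k * (v⁻¹) ^ k := by
      rw [mul_pow, show (-4 : ℝ) = -2 * 2 by norm_num, mul_pow]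
    have hvk : ((v ^ (m + 1 + (k + 1)) : ℝ))⁻¹ = (v⁻¹) ^ m * (v⁻¹) ^ k * (v⁻¹) ^ 2 := by
      rw [← inv_pow, ← pow_add, ← pow_add]; congr 1; omega
    rw [hmk, ← hC, hfk, hfq, h2k, h4k, hvk]
    have hCne : ((Nat.choose m k : ℝ)) ≠ 0 :=
      Nat.cast_ne_zero.mpr (Nat.choose_pos hk').ne'
    field_simp
    push_cast; ring
  linear_combination E1 + E2
    - ((-3 : ℝ) ^ (m + 1) * ↑(2 * m + p + 2).factorial / ↑(p + 1).factorial) * E3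
    - ((-3 : ℝ) ^ (m + 1) * ↑(2 * m + p + 2).factorial / ↑(p + 1).factorial) * E4
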